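/- Let X_1,...,X_n be i.i.d. symmetric random variables with mean zero that have a density (equivalently, whose law is atomless). Then P(max_{1≤k≤n} S_k < 0) = (2n-1)!!/(2n)!!, where S_k = X_1 + ... + X_k. -/

import Mathlib

open MeasureTheory ProbabilityTheory Finset

namespace SparreAux

noncomputable section

/-- pad a finite tuple to an infinite sequence by zeros. -/
def pad {m : ℕ} (x : Fin m → ℝ) (i : ℕ) : ℝ := if h : i < m then x ⟨i, h⟩ else 0

/-- partial sums of the padded tuple. -/
def ps {m : ℕ} (x : Fin m → ℝ) (k : ℕ) : ℝ := ∑ i ∈ Finset.range k, pad x i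

lemma measurable_pad {m : ℕ} (i : ℕ) : Measurable (fun x : Fin m → ℝ => pad x i) := by
  unfold pad
  split
  · exact measurable_pi_apply _
  · exact measurable_const

lemma measurable_ps {m : ℕ} (k : ℕ) : Measurable (fun x : Fin m → ℝ => ps x k) := by
  exact Finset.measurable_sum _ (fun i _ => measurable_pad i)

variable (μ : Measure ℝ)

abbrev piμ (m : ℕ) : Measure (Fin m → ℝ) := Measure.pi fun _ => μ

def Bneg (m : ℕ) : Set (Fin m → ℝ) := {x | ∀ k, 1 ≤ k → k ≤ m → ps x k < 0}
def Bpos (m : ℕ) : Set (Fin m → ℝ) := {x | ∀ k, 1 ≤ k → k ≤ m → 0 < ps x k}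
def Brev (m : ℕ) : Set (Fin m → ℝ) := {x | ∀ j, j < m → ps x m - ps x j < 0}

lemma measurableSet_Bneg (m : ℕ) : MeasurableSet (Bneg m) := by
  have : Bneg m = ⋂ (k : ℕ) (_ : 1 ≤ k) (_ : k ≤ m), {x : Fin m → ℝ | ps x k < 0} := by
    ext x; simp [Bneg, Set.mem_iInter]
  rw [this]
  exact MeasurableSet.iInter fun k => MeasurableSet.iInter fun _ =>
    MeasurableSet.iInter fun _ => measurableSet_lt (measurable_ps k) measurable_const

lemma measurableSet_Bpos (m : ℕ) : MeasurableSet (Bpos m) := by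
  have : Bpos m = ⋂ (k : ℕ) (_ : 1 ≤ k) (_ : k ≤ m), {x : Fin m → ℝ | 0 < ps x k} := by
    ext x; simp [Bpos, Set.mem_iInter]
  rw [this]
  exact MeasurableSet.iInter fun k => MeasurableSet.iInter fun _ =>
    MeasurableSet.iInter fun _ => measurableSet_lt measurable_const (measurable_ps k)

lemma measurableSet_Brev (m : ℕ) : MeasurableSet (Brev m) := by
  have : Brev m = ⋂ (j : ℕ) (_ : j < m), {x : Fin m → ℝ | ps x m - ps x j < 0} := by
    ext x; simp [Brev, Set.mem_iInter]
  rw [this]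
  exact MeasurableSet.iInter fun j => MeasurableSet.iInter fun _ =>
    measurableSet_lt ((measurable_ps m).sub (measurable_ps j)) measurable_const

def q (m : ℕ) : ℝ := (piμ μ m (Bneg m)).toReal

section front

variable {k m : ℕ}

def front (x : Fin (k + m) → ℝ) : Fin k → ℝ := fun i => x (Fin.castAdd m i)
def back (x : Fin (k + m) → ℝ) : Fin m → ℝ := fun j => x (Fin.natAdd k j)

lemma measurable_front : Measurable (front (k := k) (m := m)) :=
  measurable_pi_lambda _ fun i => measurable_pi_apply _

lemma measurable_back : Measurable (back (k := k) (m := m)) :=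
  measurable_pi_lambda _ fun i => measurable_pi_apply _

lemma pad_front (x : Fin (k + m) → ℝ) {i : ℕ} (hi : i < k) :
    pad (front x) i = pad x i := by
  unfold pad front
  rw [dif_pos hi, dif_pos (by omega : i < k + m)]
  congr 1

lemma pad_back (x : Fin (k + m) → ℝ) (j : ℕ) :
    pad (back x) j = pad x (k + j) := by
  unfold pad back
  by_cases h : j < m
  · rw [dif_pos h, dif_pos (by omega : k + j < k + m)]
    congr 1
  · rw [dif_neg h, dif_neg (by omega)]

lemma ps_front (x : Fin (k + m) → ℝ) {r : ℕ} (hr : r ≤ k) :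
    ps (front x) r = ps x r := by
  unfold ps
  exact Finset.sum_congr rfl fun i hi => pad_front x (by simp at hi; omega)

lemma ps_back (x : Fin (k + m) → ℝ) (r : ℕ) :
    ps (back x) r = ps x (k + r) - ps x k := by
  have h1 : ps x (k + r) - ps x k = ∑ i ∈ Finset.Ico k (k + r), pad x i := by
    unfold ps
    rw [Finset.sum_Ico_eq_sub _ (by omega)]
  rw [h1, Finset.sum_Ico_eq_sum_range]
  simp only [Nat.add_sub_cancel_left]
  unfold ps
  exact Finset.sum_congr rfl fun j _ => pad_back x j

end front

section MP

variable [IsProbabilityMeasure μ]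

lemma mp_split (k m : ℕ) :
    MeasurePreserving (fun x : Fin (k + m) → ℝ => (front x, back x))
      (piμ μ (k + m)) ((piμ μ k).prod (piμ μ m)) := by
  have h1 := (measurePreserving_piCongrLeft (fun _ : Fin (k + m) => μ)
      (finSumFinEquiv : Fin k ⊕ Fin m ≃ Fin (k + m))).symm
      (MeasurableEquiv.piCongrLeft (fun _ => ℝ) finSumFinEquiv)
  have h2 := measurePreserving_sumPiEquivProdPi (fun _ : Fin k ⊕ Fin m => μ)
  have h3 := h2.comp h1
  convert h3 using 1
  funext x; rfl

lemma measure_split {k m : ℕ} {C1 : Set (Fin k → ℝ)} {C2 : Set (Fin m → ℝ)}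
    (h1 : MeasurableSet C1) (h2 : MeasurableSet C2) :
    piμ μ (k + m) {x | front x ∈ C1 ∧ back x ∈ C2} = piμ μ k C1 * piμ μ m C2 := by
  have h := (mp_split μ k m).measure_preimage (h1.prod h2).nullMeasurableSet
  have hs : (fun x : Fin (k+m) → ℝ => (front x, back x)) ⁻¹' (C1 ×ˢ C2)
      = {x | front x ∈ C1 ∧ back x ∈ C2} := rfl
  rw [hs] at h
  rw [h, Measure.prod_prod]

lemma mp_rev (m : ℕ) :
    MeasurePreserving (fun x : Fin m → ℝ => x ∘ Fin.rev) (piμ μ m) (piμ μ m) := by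
  have h1 := (measurePreserving_piCongrLeft (fun _ : Fin m => μ)
      (Fin.revPerm : Fin m ≃ Fin m)).symm
      (MeasurableEquiv.piCongrLeft (fun _ => ℝ) Fin.revPerm)
  convert h1 using 1
  funext x; rfl

lemma mp_neg (hsym : Measure.map (fun a : ℝ => -a) μ = μ) (m : ℕ) :
    MeasurePreserving (fun x : Fin m → ℝ => -x) (piμ μ m) (piμ μ m) := by
  have h : MeasurePreserving (fun a : ℝ => -a) μ μ := ⟨measurable_neg, hsym⟩
  exact measurePreserving_pi _ _ (fun _ => h)

lemma pad_comp_rev {m : ℕ} (x : Fin m → ℝ) {i : ℕ} (hi : i < m) :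
    pad (x ∘ Fin.rev) i = pad x (m - 1 - i) := by
  unfold pad
  rw [dif_pos hi, dif_pos (by omega : m - 1 - i < m)]
  show x (Fin.rev _) = _
  congr 1
  ext
  simp [Fin.rev]
  omega

lemma ps_rev {m : ℕ} (x : Fin m → ℝ) {t : ℕ} (ht : t ≤ m) :
    ps (x ∘ Fin.rev) t = ps x m - ps x (m - t) := by
  have h1 : ps x m - ps x (m - t) = ∑ i ∈ Finset.Ico (m - t) m, pad x i := by
    unfold ps; rw [Finset.sum_Ico_eq_sub _ (by omega)]
  rw [h1]
  unfold ps
  refine Finset.sum_nbij' (fun i => m - 1 - i) (fun i => m - 1 - i) ?_ ?_ ?_ ?_ ?_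
  · intro a ha; simp only [Finset.mem_range] at ha; simp only [Finset.mem_Ico]; omega
  · intro a ha; simp only [Finset.mem_Ico] at ha; simp only [Finset.mem_range]; omega
  · intro a ha; simp only [Finset.mem_range] at ha
    show m - 1 - (m - 1 - a) = a; omega
  · intro a ha; simp only [Finset.mem_Ico] at ha
    show m - 1 - (m - 1 - a) = a; omega
  · intro a ha; simp only [Finset.mem_range] at ha
    exact pad_comp_rev x (by omega)

lemma rev_preimage (m : ℕ) :
    (fun x : Fin m → ℝ => x ∘ Fin.rev) ⁻¹' (Bneg m) = Brev m := by
  ext x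
  simp only [Set.mem_preimage, Bneg, Brev, Set.mem_setOf_eq]
  constructor
  · intro h j hj
    have := h (m - j) (by omega) (by omega)
    rwa [ps_rev x (by omega : m - j ≤ m), (by omega : m - (m - j) = j)] at this
  · intro h t ht1 ht2
    rw [ps_rev x ht2]
    exact h (m - t) (by omega)

lemma measure_Brev [IsProbabilityMeasure μ] (m : ℕ) :
    piμ μ m (Brev m) = piμ μ m (Bneg m) := by
  rw [← rev_preimage m]
  exact (mp_rev μ m).measure_preimage (measurableSet_Bneg m).nullMeasurableSet

lemma pad_neg {m : ℕ} (x : Fin m → ℝ) (i : ℕ) : pad (-x) i = -pad x i := by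
  unfold pad; split <;> simp

lemma ps_neg {m : ℕ} (x : Fin m → ℝ) (k : ℕ) : ps (-x) k = -ps x k := by
  unfold ps
  rw [← Finset.sum_neg_distrib]
  exact Finset.sum_congr rfl fun i _ => pad_neg x i

lemma neg_preimage (m : ℕ) :
    (fun x : Fin m → ℝ => -x) ⁻¹' (Bneg m) = Bpos m := by
  ext x
  simp only [Set.mem_preimage, Bneg, Bpos, Set.mem_setOf_eq]
  refine forall_congr' fun k => ?_
  rw [ps_neg]
  constructor <;> intro h h1 h2 <;> have := h h1 h2 <;> linarith

lemma measure_Bpos [IsProbabilityMeasure μ]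
    (hsym : Measure.map (fun a : ℝ => -a) μ = μ) (m : ℕ) :
    piμ μ m (Bpos m) = piμ μ m (Bneg m) := by
  rw [← neg_preimage m]
  exact (mp_neg μ hsym m).measure_preimage (measurableSet_Bneg m).nullMeasurableSet

lemma measure_last [IsProbabilityMeasure μ] (hatom : ∀ c : ℝ, μ {c} = 0) (s : ℕ) :
    piμ μ (s + 1) {x | ps x (s + 1) = 0} = 0 := by
  have mpG := ((MeasurePreserving.id (piμ μ s)).prod
    (measurePreserving_funUnique μ (Fin 1))).comp (mp_split μ s 1)
  have hH : MeasurableSet {p : (Fin s → ℝ) × ℝ | ps p.1 s + p.2 = 0} :=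
    measurableSet_eq_fun ((measurable_ps s).comp measurable_fst |>.add measurable_snd)
      measurable_const
  have hpre : ((Prod.map (id : (Fin s → ℝ) → Fin s → ℝ)
        (MeasurableEquiv.funUnique (Fin 1) ℝ)) ∘ (fun x : Fin (s+1) → ℝ => (front x, back x))) ⁻¹'
      {p : (Fin s → ℝ) × ℝ | ps p.1 s + p.2 = 0} = {x | ps x (s + 1) = 0} := by
    ext x
    simp only [Set.mem_preimage, Set.mem_setOf_eq, Function.comp_apply, Prod.map, id_eq,
      MeasurableEquiv.funUnique_apply]
    have h1 : ps (front x) s = ps x s := ps_front x le_rfl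
    have h2 : back x (default : Fin 1) = pad x s := by
      unfold back pad
      rw [dif_pos (by omega : s < s + 1)]
      congr 1
    have h3 : ps x (s + 1) = ps x s + pad x s := by
      unfold ps; rw [Finset.sum_range_succ]
    rw [h1, h2, h3]
  have := mpG.measure_preimage hH.nullMeasurableSet
  rw [hpre] at this
  rw [this, Measure.prod_apply hH]
  have hz : ∀ y : Fin s → ℝ, μ (Prod.mk y ⁻¹' {p : (Fin s → ℝ) × ℝ | ps p.1 s + p.2 = 0}) = 0 := by
    intro y
    have : Prod.mk y ⁻¹' {p : (Fin s → ℝ) × ℝ | ps p.1 s + p.2 = 0} = {-(ps y s)} := by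
      ext b
      simp only [Set.mem_preimage, Set.mem_setOf_eq, Set.mem_singleton_iff]
      constructor <;> intro h <;> linarith
    rw [this]
    exact hatom _
  simp only [hz, lintegral_zero]

lemma measure_ps_zero [IsProbabilityMeasure μ] (hatom : ∀ c : ℝ, μ {c} = 0)
    {m r : ℕ} (h1 : 1 ≤ r) (hr : r ≤ m) :
    piμ μ m {x | ps x r = 0} = 0 := by
  obtain ⟨u, rfl⟩ : ∃ u, m = r + u := ⟨m - r, by omega⟩
  have hset : {x : Fin (r + u) → ℝ | ps x r = 0}
      = {x | front x ∈ {y : Fin r → ℝ | ps y r = 0} ∧ back x ∈ Set.univ} := by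
    ext x
    simp only [Set.mem_setOf_eq, Set.mem_univ, and_true]
    rw [ps_front x le_rfl]
  rw [hset, measure_split μ (measurableSet_eq_fun (measurable_ps r) measurable_const)
    MeasurableSet.univ]
  obtain ⟨t, rfl⟩ : ∃ t, r = t + 1 := ⟨r - 1, by omega⟩
  rw [measure_last μ hatom t]
  simp

lemma measure_window [IsProbabilityMeasure μ] (hatom : ∀ c : ℝ, μ {c} = 0)
    {n j l : ℕ} (hjl : j < l) (hl : l ≤ n) :
    piμ μ n {x | ps x l - ps x j = 0} = 0 := by
  obtain ⟨m, rfl⟩ : ∃ m, n = j + m := ⟨n - j, by omega⟩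
  obtain ⟨r, rfl⟩ : ∃ r, l = j + r := ⟨l - j, by omega⟩
  have hset : {x : Fin (j + m) → ℝ | ps x (j + r) - ps x j = 0}
      = {x | front x ∈ (Set.univ : Set (Fin j → ℝ))
          ∧ back x ∈ {y : Fin m → ℝ | ps y r = 0}} := by
    ext x
    simp only [Set.mem_setOf_eq, Set.mem_univ, true_and]
    rw [ps_back]
  rw [hset, measure_split μ MeasurableSet.univ
    (measurableSet_eq_fun (measurable_ps r) measurable_const)]
  rw [measure_ps_zero μ hatom (by omega : 1 ≤ r) (by omega : r ≤ m)]
  simp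

def Ak (n k : ℕ) : Set (Fin n → ℝ) := {x | ∀ j, j ≤ n → j ≠ k → ps x k < ps x j}

lemma measurableSet_Ak (n k : ℕ) : MeasurableSet (Ak n k) := by
  have : Ak n k = ⋂ (j : ℕ) (_ : j ≤ n) (_ : j ≠ k), {x : Fin n → ℝ | ps x k < ps x j} := by
    ext x; simp [Ak, Set.mem_iInter]
  rw [this]
  exact MeasurableSet.iInter fun j => MeasurableSet.iInter fun _ =>
    MeasurableSet.iInter fun _ => measurableSet_lt (measurable_ps k) (measurable_ps j)

lemma Ak_split (k m : ℕ) :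
    Ak (k + m) k = {x | front x ∈ Brev k ∧ back x ∈ Bpos m} := by
  ext x
  simp only [Ak, Brev, Bpos, Set.mem_setOf_eq]
  constructor
  · intro h
    constructor
    · intro j hj
      rw [ps_front x le_rfl, ps_front x (by omega : j ≤ k)]
      have := h j (by omega) (by omega)
      linarith
    · intro r hr1 hr2
      rw [ps_back]
      have := h (k + r) (by omega) (by omega)
      linarith
  · rintro ⟨h1, h2⟩ j hj hjk
    rcases lt_or_gt_of_ne hjk with hlt | hgt
    · have := h1 j hlt
      rw [ps_front x le_rfl, ps_front x (by omega : j ≤ k)] at this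
      linarith
    · have := h2 (j - k) (by omega) (by omega)
      rw [ps_back, (by omega : k + (j - k) = j)] at this
      linarith

lemma measure_Ak [IsProbabilityMeasure μ] (hsym : Measure.map (fun a : ℝ => -a) μ = μ)
    (k m : ℕ) :
    piμ μ (k + m) (Ak (k + m) k) = piμ μ k (Bneg k) * piμ μ m (Bneg m) := by
  rw [Ak_split, measure_split μ (measurableSet_Brev k) (measurableSet_Bpos m),
    measure_Brev μ k, measure_Bpos μ hsym m]

lemma sum_measure_Ak [IsProbabilityMeasure μ] (hatom : ∀ c : ℝ, μ {c} = 0) (n : ℕ) :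
    ∑ k ∈ Finset.range (n + 1), piμ μ n (Ak n k) = 1 := by
  classical
  -- the union of the Ak's has full measure
  set D : Set (Fin n → ℝ) :=
    ⋃ p : ℕ × ℕ, if p.1 < p.2 ∧ p.2 ≤ n then {x : Fin n → ℝ | ps x p.2 - ps x p.1 = 0} else ∅
    with hD
  have hDnull : piμ μ n D = 0 := by
    refine measure_iUnion_null fun p => ?_
    split_ifs with h
    · exact measure_window μ hatom h.1 h.2
    · simp
  have hcover : (Set.univ : Set (Fin n → ℝ)) ⊆ (⋃ k ∈ Finset.range (n + 1), Ak n k) ∪ D := by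
    intro x _
    by_cases hx : ∃ j l, j < l ∧ l ≤ n ∧ ps x j = ps x l
    · right
      obtain ⟨j, l, h1, h2, h3⟩ := hx
      refine Set.mem_iUnion.2 ⟨(j, l), ?_⟩
      rw [if_pos ⟨h1, h2⟩]
      simp only [Set.mem_setOf_eq]
      linarith
    · left
      push_neg at hx
      obtain ⟨k, hk, hmin⟩ := Finset.exists_min_image (Finset.range (n + 1))
        (fun j => ps x j) ⟨0, by simp⟩
      simp only [Finset.mem_range] at hk
      refine Set.mem_biUnion (Finset.mem_range.2 hk) ?_
      intro j hj hjk
      have hle := hmin j (by simp [Finset.mem_range]; omega)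
      rcases lt_or_gt_of_ne hjk with hlt | hgt
      · have hne := hx j k hlt (by omega)
        cases lt_or_eq_of_le hle with
        | inl h => exact h
        | inr h => exact absurd h.symm hne
      · have hne := hx k j hgt hj
        cases lt_or_eq_of_le hle with
        | inl h => exact h
        | inr h => exact absurd h hne
  have hdisj : (↑(Finset.range (n + 1)) : Set ℕ).PairwiseDisjoint (Ak n) := by
    intro a ha b hb hab
    simp only [Finset.coe_range, Set.mem_Iio] at ha hb
    rw [Function.onFun, Set.disjoint_left]
    intro x hxa hxb
    have h1 := hxa b (by omega) hab.symm
    have h2 := hxb a (by omega) hab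
    linarith
  rw [← measure_biUnion_finset hdisj fun k _ => measurableSet_Ak n k]
  refine le_antisymm prob_le_one ?_
  have h1 : (1 : ENNReal) = piμ μ n Set.univ := (measure_univ).symm
  rw [h1]
  calc piμ μ n Set.univ ≤ piμ μ n ((⋃ k ∈ Finset.range (n + 1), Ak n k) ∪ D) :=
        measure_mono hcover
    _ ≤ piμ μ n (⋃ k ∈ Finset.range (n + 1), Ak n k) + piμ μ n D := measure_union_le _ _
    _ = piμ μ n (⋃ k ∈ Finset.range (n + 1), Ak n k) := by rw [hDnull, add_zero]

lemma recurrence_ennreal [IsProbabilityMeasure μ] (hsym : Measure.map (fun a : ℝ => -a) μ = μ)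
    (hatom : ∀ c : ℝ, μ {c} = 0) (n : ℕ) :
    ∑ k ∈ Finset.range (n + 1), piμ μ k (Bneg k) * piμ μ (n - k) (Bneg (n - k)) = 1 := by
  rw [← sum_measure_Ak μ hatom n]
  refine Finset.sum_congr rfl fun k hk => ?_
  simp only [Finset.mem_range] at hk
  obtain ⟨m, rfl⟩ : ∃ m, n = k + m := ⟨n - k, by omega⟩
  rw [(by omega : k + m - k = m), measure_Ak μ hsym k m]

end MP

section Algebra

/-- the target value `(2k-1)‼ / (2k)‼`. -/
def c (k : ℕ) : ℝ := (Nat.doubleFactorial (2 * k - 1) : ℝ) / (Nat.doubleFactorial (2 * k))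

lemma c_zero : c 0 = 1 := by simp [c, Nat.doubleFactorial]

lemma doubleFactorial_pos (n : ℕ) : 0 < Nat.doubleFactorial n := by
  induction n using Nat.strong_induction_on with
  | _ n ih =>
    match n with
    | 0 => simp [Nat.doubleFactorial]
    | 1 => simp [Nat.doubleFactorial]
    | (k+2) =>
      rw [Nat.doubleFactorial]
      exact Nat.mul_pos (by omega) (ih k (by omega))

lemma c_rec (k : ℕ) : 2 * ((k : ℝ) + 1) * c (k + 1) = (2 * k + 1) * c k := by
  have hnum : Nat.doubleFactorial (2 * (k + 1) - 1)
      = (2 * k + 1) * Nat.doubleFactorial (2 * k - 1) := by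
    cases k with
    | zero => simp [Nat.doubleFactorial]
    | succ j =>
      have h1 : 2 * (j + 1 + 1) - 1 = (2 * (j + 1) - 1) + 2 := by omega
      rw [h1, Nat.doubleFactorial]
      congr 1
  have hden : Nat.doubleFactorial (2 * (k + 1)) = (2 * k + 2) * Nat.doubleFactorial (2 * k) := by
    have h1 : 2 * (k + 1) = 2 * k + 2 := by omega
    rw [h1, Nat.doubleFactorial]
  have hd0 : (Nat.doubleFactorial (2 * k) : ℝ) ≠ 0 :=
    Nat.cast_ne_zero.2 (doubleFactorial_pos _).ne'
  unfold c
  rw [hnum, hden]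
  push_cast
  field_simp

lemma c_pos (k : ℕ) : 0 < c k :=
  div_pos (Nat.cast_pos.2 (doubleFactorial_pos _)) (Nat.cast_pos.2 (doubleFactorial_pos _))

lemma c_conv (n : ℕ) : ∑ k ∈ Finset.range (n + 1), c k * c (n - k) = 1 := by
  induction n with
  | zero => simp [c_zero]
  | succ n ih =>
    -- T = ∑ (2k+1) c_k c_{n-k}
    set T : ℝ := ∑ k ∈ Finset.range (n + 1), (2 * (k : ℝ) + 1) * (c k * c (n - k)) with hT
    have hTrefl : T = ∑ k ∈ Finset.range (n + 1),
        (2 * ((n : ℝ) - k) + 1) * (c (n - k) * c k) := by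
      rw [hT, ← Finset.sum_range_reflect]
      simp only [Nat.add_sub_cancel]
      refine Finset.sum_congr rfl fun k hk => ?_
      simp only [Finset.mem_range] at hk
      have h1 : n - (n - k) = k := by omega
      rw [h1]
      have h2 : ((n - k : ℕ) : ℝ) = (n : ℝ) - k := by
        rw [Nat.cast_sub (by omega)]
      rw [h2]
    have hstep1 : 2 * T = (2 * (n : ℝ) + 2) * ∑ k ∈ Finset.range (n + 1), c k * c (n - k) := by
      have : 2 * T = T + T := by ring
      rw [this]
      nth_rewrite 2 [hTrefl]
      rw [hT, ← Finset.sum_add_distrib, Finset.mul_sum]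
      refine Finset.sum_congr rfl fun k hk => ?_
      simp only [Finset.mem_range] at hk
      ring
    have hstep2 : T = ((n : ℝ) + 1) * ∑ k ∈ Finset.range (n + 2), c k * c (n + 1 - k) := by
      have hTr : T = ∑ k ∈ Finset.range (n + 1),
          2 * ((k : ℝ) + 1) * c (k + 1) * c (n - k) := by
        rw [hT]
        refine Finset.sum_congr rfl fun k hk => ?_
        rw [← mul_assoc, ← c_rec k]
      -- reindex:  = ∑_{j ∈ range (n+2)} 2 j c_j c_{n+1-j}
      have hV : ∑ j ∈ Finset.range (n + 2), 2 * (j : ℝ) * c j * c (n + 1 - j)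
          = ∑ k ∈ Finset.range (n + 1), 2 * ((k : ℝ) + 1) * c (k + 1) * c (n - k) := by
        rw [Finset.sum_range_succ']
        simp only [Nat.cast_zero, mul_zero, zero_mul, add_zero, Nat.cast_add, Nat.cast_one]
        refine Finset.sum_congr rfl fun k hk => ?_
        have : n + 1 - (k + 1) = n - k := by omega
        rw [this]
      have hVrefl : ∑ j ∈ Finset.range (n + 2), 2 * (j : ℝ) * c j * c (n + 1 - j)
          = ∑ j ∈ Finset.range (n + 2), 2 * ((n : ℝ) + 1 - j) * c (n + 1 - j) * c j := by
        rw [← Finset.sum_range_reflect]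
        refine Finset.sum_congr rfl fun j hj => ?_
        simp only [Finset.mem_range] at hj
        have h0 : n + 2 - 1 - j = n + 1 - j := by omega
        rw [h0]
        have h1 : n + 1 - (n + 1 - j) = j := by omega
        rw [h1]
        have h2 : ((n + 1 - j : ℕ) : ℝ) = (n : ℝ) + 1 - j := by
          rw [Nat.cast_sub (by omega)]
          push_cast; ring
        rw [h2]
      have h2V : 2 * (∑ j ∈ Finset.range (n + 2), 2 * (j : ℝ) * c j * c (n + 1 - j))
          = (2 * ((n : ℝ) + 1)) * ∑ k ∈ Finset.range (n + 2), c k * c (n + 1 - k) := by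
        have : 2 * (∑ j ∈ Finset.range (n + 2), 2 * (j : ℝ) * c j * c (n + 1 - j))
            = (∑ j ∈ Finset.range (n + 2), 2 * (j : ℝ) * c j * c (n + 1 - j))
              + ∑ j ∈ Finset.range (n + 2), 2 * ((n : ℝ) + 1 - j) * c (n + 1 - j) * c j := by
          rw [← hVrefl]; ring
        rw [this, ← Finset.sum_add_distrib, Finset.mul_sum]
        refine Finset.sum_congr rfl fun j hj => ?_
        ring
      have := h2V
      rw [hV, ← hTr] at this
      linarith
    rw [ih] at hstep1
    have hfin : ((n : ℝ) + 1) * ∑ k ∈ Finset.range (n + 2), c k * c (n + 1 - k)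
        = ((n : ℝ) + 1) * 1 := by
      rw [← hstep2]
      linarith
    have hne : ((n : ℝ) + 1) ≠ 0 := by positivity
    have := mul_left_cancel₀ hne hfin
    simpa using this

/-- uniqueness: any sequence with `q 0 = 1` satisfying the convolution identity equals `c`. -/
lemma q_eq_c (q : ℕ → ℝ) (hq0 : q 0 = 1)
    (hrec : ∀ n, ∑ k ∈ Finset.range (n + 1), q k * q (n - k) = 1) :
    ∀ n, q n = c n := by
  intro n
  induction n using Nat.strong_induction_on with
  | _ n ih =>
    match n with
    | 0 => rw [hq0, c_zero]
    | (m + 1) =>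
      have h1 := hrec (m + 1)
      have h2 := c_conv (m + 1)
      rw [Finset.sum_range_succ, Finset.sum_range_succ'] at h1 h2
      simp only [Nat.sub_zero, Nat.sub_self] at h1 h2
      have hmid : ∑ i ∈ Finset.range m, q (i + 1) * q (m + 1 - (i + 1))
          = ∑ i ∈ Finset.range m, c (i + 1) * c (m + 1 - (i + 1)) := by
        refine Finset.sum_congr rfl fun i hi => ?_
        simp only [Finset.mem_range] at hi
        rw [ih (i + 1) (by omega), ih (m + 1 - (i + 1)) (by omega)]
      rw [hq0] at h1
      rw [c_zero] at h2
      rw [hmid] at h1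
      linarith

end Algebra

section Transfer

variable {Ω : Type*} [MeasureSpace Ω] [IsProbabilityMeasure (ℙ : Measure Ω)]

lemma map_tuple (X : ℕ → Ω → ℝ) (hmeas : ∀ i, Measurable (X i))
    (hindep : iIndepFun X ℙ)
    (hid : ∀ i, IdentDistrib (X i) (X 1) ℙ ℙ)
    {m : ℕ} (f : Fin m → ℕ) (hf : Function.Injective f) :
    Measure.map (fun ω (i : Fin m) => X (f i) ω) ℙ = piμ (Measure.map (X 1) ℙ) m := by
  classical
  have hT : Measurable (fun ω (i : Fin m) => X (f i) ω) :=
    measurable_pi_lambda _ fun i => hmeas (f i)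
  refine (Measure.pi_eq fun s hs => ?_).symm
  rw [Measure.map_apply hT (MeasurableSet.univ_pi hs)]
  -- the preimage of the box is an intersection of preimages
  set sets : ℕ → Set ℝ := fun j => if h : ∃ i, f i = j then s h.choose else Set.univ with hsets
  have hsets_eq : ∀ i : Fin m, sets (f i) = s i := by
    intro i
    have hex : ∃ i', f i' = f i := ⟨i, rfl⟩
    rw [hsets]
    simp only [dif_pos hex]
    have := hex.choose_spec
    rw [hf this]
  have hpre : (fun ω (i : Fin m) => X (f i) ω) ⁻¹' (Set.univ.pi s)
      = ⋂ j ∈ Finset.image f Finset.univ, X j ⁻¹' sets j := by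
    ext ω
    simp only [Set.mem_preimage, Set.mem_pi, Set.mem_univ, forall_true_left, Set.mem_iInter,
      Finset.mem_image, Finset.mem_univ, true_and]
    constructor
    · rintro h j ⟨i, rfl⟩
      rw [hsets_eq i]
      exact h i
    · intro h i
      have := h (f i) ⟨i, rfl⟩
      rwa [hsets_eq i] at this
  rw [hpre]
  have hmeas_sets : ∀ j, j ∈ Finset.image f Finset.univ → MeasurableSet (sets j) := by
    intro j hj
    simp only [Finset.mem_image, Finset.mem_univ, true_and] at hj
    obtain ⟨i, rfl⟩ := hj
    rw [hsets_eq i]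
    exact hs i
  rw [hindep.measure_inter_preimage_eq_mul _ hmeas_sets]
  rw [Finset.prod_image (fun a _ b _ h => hf h)]
  refine Finset.prod_congr rfl fun i _ => ?_
  rw [hsets_eq i]
  rw [← Measure.map_apply (hmeas (f i)) (hs i), (hid (f i)).map_eq]

end Transfer

end

end SparreAux

open SparreAux

/-- For i.i.d. symmetric mean-zero random variables with a density,
`P(max_{1≤k≤n} S_k < 0) = (2n-1)!!/(2n)!!`. -/
theorem persistence_partial_sums_eq_double_factorial
    {Ω : Type*} [MeasureSpace Ω] [IsProbabilityMeasure (ℙ : Measure Ω)]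
    (n : ℕ) (hn : 1 ≤ n)
    (X : ℕ → Ω → ℝ) (hmeas : ∀ i, Measurable (X i))
    (hindep : iIndepFun X ℙ)
    (hid : ∀ i, IdentDistrib (X i) (X 1) ℙ ℙ)
    (hsymm : IdentDistrib (X 1) (fun ω => -X 1 ω) ℙ ℙ)
    (hint : Integrable (X 1) ℙ)
    (hmean : ∫ ω, X 1 ω = 0)
    (hdens : Measure.map (X 1) ℙ ≪ (volume : Measure ℝ))
    (S : ℕ → Ω → ℝ) (hS : ∀ k ω, S k ω = ∑ i ∈ Finset.Icc 1 k, X i ω) :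
    (ℙ {ω | ∀ k ∈ Finset.Icc 1 n, S k ω < 0}).toReal
        = (Nat.doubleFactorial (2 * n - 1) : ℝ) / (Nat.doubleFactorial (2 * n)) := by
  classical
  set μ : Measure ℝ := Measure.map (X 1) ℙ with hμ
  haveI : IsProbabilityMeasure μ := Measure.isProbabilityMeasure_map (hmeas 1).aemeasurable
  have hsymμ : Measure.map (fun a : ℝ => -a) μ = μ := by
    have h1 : Measure.map (fun a : ℝ => -a) μ = Measure.map (fun ω => -X 1 ω) ℙ := by
      rw [hμ, Measure.map_map measurable_neg (hmeas 1)]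
      rfl
    rw [h1, ← hsymm.map_eq]
  have hatom : ∀ c : ℝ, μ {c} = 0 := fun c => hdens Real.volume_singleton
  have hq0 : q μ 0 = 1 := by
    have hB : Bneg 0 = Set.univ := by
      ext x
      simp only [Bneg, Set.mem_setOf_eq, Set.mem_univ, iff_true]
      intro k h1 h2; omega
    unfold q
    rw [hB, measure_univ, ENNReal.toReal_one]
  have hqrec : ∀ N, ∑ k ∈ Finset.range (N + 1), q μ k * q μ (N - k) = 1 := by
    intro N
    have h := recurrence_ennreal μ hsymμ hatom N
    have h2 := congrArg ENNReal.toReal h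
    rw [ENNReal.toReal_sum (fun k _ => ENNReal.mul_ne_top (measure_ne_top _ _)
      (measure_ne_top _ _)), ENNReal.toReal_one] at h2
    rw [← h2]
    exact Finset.sum_congr rfl fun k _ => (ENNReal.toReal_mul).symm
  have hqc : q μ n = c n := q_eq_c (q μ) hq0 hqrec n
  set T : Ω → Fin n → ℝ := fun ω (i : Fin n) => X ((i : ℕ) + 1) ω with hT
  have hTmeas : Measurable T := measurable_pi_lambda _ fun i => hmeas _
  have hmap : Measure.map T ℙ = piμ μ n :=
    map_tuple X hmeas hindep hid (fun i : Fin n => (i : ℕ) + 1)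
      (fun a b hab => by
        have h : (a : ℕ) + 1 = (b : ℕ) + 1 := hab
        exact Fin.ext (by omega))
  have hps : ∀ (ω : Ω) (k : ℕ), k ≤ n → ps (T ω) k = S k ω := by
    intro ω k hk
    rw [hS k ω]
    have h1 : Finset.Icc 1 k = Finset.Ico 1 (k + 1) := by
      rw [Finset.Ico_add_one_right_eq_Icc]
    rw [h1, Finset.sum_Ico_eq_sum_range]
    simp only [Nat.add_sub_cancel]
    unfold ps pad
    refine Finset.sum_congr rfl fun i hi => ?_
    simp only [Finset.mem_range] at hi
    rw [dif_pos (by omega : i < n)]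
    show X (i + 1) ω = X (1 + i) ω
    congr 1
    omega
  have hevent : {ω | ∀ k ∈ Finset.Icc 1 n, S k ω < 0} = T ⁻¹' (Bneg n) := by
    ext ω
    simp only [Set.mem_setOf_eq, Set.mem_preimage, Finset.mem_Icc, Bneg]
    constructor
    · intro h k h1 h2
      rw [hps ω k h2]
      exact h k ⟨h1, h2⟩
    · rintro h k ⟨h1, h2⟩
      rw [← hps ω k h2]
      exact h k h1 h2
  rw [hevent, ← Measure.map_apply hTmeas (measurableSet_Bneg n), hmap]
  exact hqc
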